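/- Let n be a positive integer. Define T(φ) = ∫_{M_n(ℝ)} φ(x, 0) dx for Schwartz functions φ on M_n(ℝ) × M_n(ℝ), the integral taken with respect to Lebesgue measure. Then: (1) T is a well-defined tempered distribution (the integral converges and T is a continuous linear functional); (2) for all g, h ∈ GL_n(ℝ) and every Schwartz φ, T((x,y) ↦ φ(g x h⁻¹, h y g⁻¹)) = |det g|^{−n} · |det h|^{n} · T(φ); (3) there exists a Schwartz function φ with T((x,y) ↦ φ(yᵀ, xᵀ)) ≠ T(φ). -/

import Mathlib

/-!
The counterexample from the introduction of the paper: the tempered distribution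
`T(φ) = ∫_{Mₙ(ℝ)} φ(x, 0) dx` on `Mₙ(ℝ) × Mₙ(ℝ)` is
`(|det g|⁻ⁿ · |det h|ⁿ)`-equivariant but not invariant under `(x,y) ↦ (yᵀ, xᵀ)`.
-/

open SchwartzMap Matrix MeasureTheory

attribute [local instance] Matrix.normedAddCommGroup Matrix.normedSpace

noncomputable instance (n : ℕ) : MeasureSpace (Matrix (Fin n) (Fin n) ℝ) :=
  inferInstanceAs (MeasureSpace (Fin n → Fin n → ℝ))

/-! ### Auxiliary instances -/

instance (n : ℕ) : BorelSpace (Matrix (Fin n) (Fin n) ℝ) :=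
  inferInstanceAs (BorelSpace (Fin n → Fin n → ℝ))

instance (n : ℕ) : SecondCountableTopology (Matrix (Fin n) (Fin n) ℝ) :=
  inferInstanceAs (SecondCountableTopology (Fin n → Fin n → ℝ))

instance (n : ℕ) :
    (volume : Measure (Matrix (Fin n) (Fin n) ℝ)).IsAddHaarMeasure :=
  by
    have : ∀ i : Fin n, (volume : Measure (Fin n → ℝ)).IsAddHaarMeasure := fun _ => inferInstance
    exact Measure.pi.isAddHaarMeasure _

instance (n : ℕ) : @BorelSpace (Matrix (Fin n) (Fin n) ℝ)
    (UniformSpace.toTopologicalSpace (self := PseudoMetricSpace.toUniformSpace)) _ :=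
  ⟨(show BorelSpace (Fin n → Fin n → ℝ) from inferInstance).measurable_eq⟩

instance (n : ℕ) : @Measure.IsAddHaarMeasure (Matrix (Fin n) (Fin n) ℝ) _
    (UniformSpace.toTopologicalSpace (self := PseudoMetricSpace.toUniformSpace)) _ volume := by
  have := Measure.pi.isAddHaarMeasure (fun _ : Fin n => (volume : Measure (Fin n → ℝ)))
  exact this

/-! ### A compactly supported smooth function is a Schwartz function -/

section CompactSupport

variable {E F : Type*} [NormedAddCommGroup E] [NormedSpace ℝ E] [Nonempty E]
  [NormedAddCommGroup F] [NormedSpace ℝ F]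

/-- A smooth compactly supported function, as a Schwartz function. -/
noncomputable def myOfCompactSupport (f : E → F) (hs : ContDiff ℝ ((⊤ : ℕ∞) : WithTop ℕ∞) f)
    (hc : HasCompactSupport f) : 𝓢(E, F) where
  toFun := f
  smooth' := hs
  decay' := by
    intro k m
    have hcont : Continuous fun x => ‖x‖ ^ k * ‖iteratedFDeriv ℝ m f x‖ :=
      ((continuous_norm.pow k)).mul (hs.continuous_iteratedFDeriv (mod_cast le_top)).norm
    have hsupp : HasCompactSupport fun x => ‖x‖ ^ k * ‖iteratedFDeriv ℝ m f x‖ :=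
      (hc.iteratedFDeriv m).norm.mul_left
    obtain ⟨x₀, hx₀⟩ := hcont.exists_forall_ge_of_hasCompactSupport hsupp
    exact ⟨_, hx₀⟩

@[simp] lemma myOfCompactSupport_apply (f : E → F) (hs : ContDiff ℝ ((⊤ : ℕ∞) : WithTop ℕ∞) f)
    (hc : HasCompactSupport f) (x : E) : myOfCompactSupport f hs hc x = f x := rfl

end CompactSupport

/-! ### Integral of a composition with a linear equivalence -/

lemma integral_comp_linearEquiv' {E F : Type*} [NormedAddCommGroup E] [NormedSpace ℝ E]
    [MeasurableSpace E] [BorelSpace E] [FiniteDimensional ℝ E]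
    (μ : Measure E) [μ.IsAddHaarMeasure]
    [NormedAddCommGroup F] [NormedSpace ℝ F]
    (L : E ≃ₗ[ℝ] E) (f : E → F) :
    ∫ x, f (L x) ∂μ = |LinearMap.det (L : E →ₗ[ℝ] E)|⁻¹ • ∫ x, f x ∂μ := by
  have hd : LinearMap.det (L : E →ₗ[ℝ] E) ≠ 0 := by
    simpa using (LinearEquiv.isUnit_det' L).ne_zero
  have hemb : MeasurableEmbedding (L : E → E) :=
    L.toContinuousLinearEquiv.toHomeomorph.measurableEmbedding
  have h1 : ∫ x, f (L x) ∂μ = ∫ y, f y ∂(Measure.map (L : E → E) μ) :=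
    (hemb.integral_map f).symm
  have h2 : Measure.map (L : E → E) μ
      = ENNReal.ofReal |(LinearMap.det (L : E →ₗ[ℝ] E))⁻¹| • μ := by
    have := Measure.map_linearMap_addHaar_eq_smul_addHaar (f := (L : E →ₗ[ℝ] E)) μ hd
    simpa using this
  rw [h1, h2, integral_smul_measure, ENNReal.toReal_ofReal (abs_nonneg _), abs_inv]

/-! ### The determinant of `x ↦ A * x * B` on matrices -/

section DetLR

variable {n : ℕ}

/-- Left-right multiplication `x ↦ A * x * B` as a linear map on matrices. -/
def lrLin (A B : Matrix (Fin n) (Fin n) ℝ) :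
    Matrix (Fin n) (Fin n) ℝ →ₗ[ℝ] Matrix (Fin n) (Fin n) ℝ where
  toFun x := A * x * B
  map_add' x y := by
    show A * (x + y) * B = A * x * B + A * y * B
    rw [Matrix.mul_add, Matrix.add_mul]
  map_smul' r x := by
    show A * (r • x) * B = r • (A * x * B)
    rw [Matrix.mul_smul, Matrix.smul_mul]

lemma stdBasis_repr_apply (M : Matrix (Fin n) (Fin n) ℝ) (i j : Fin n) :
    (Matrix.stdBasis ℝ (Fin n) (Fin n)).repr M (i, j) = M i j := by
  simp [Matrix.stdBasis, Pi.basis_repr, Pi.basisFun_repr]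

open Kronecker in
lemma det_lrLin (A B : Matrix (Fin n) (Fin n) ℝ) :
    LinearMap.det (lrLin A B) = A.det ^ n * B.det ^ n := by
  classical
  rw [← LinearMap.det_toMatrix (Matrix.stdBasis ℝ (Fin n) (Fin n))]
  have key : LinearMap.toMatrix (Matrix.stdBasis ℝ (Fin n) (Fin n))
      (Matrix.stdBasis ℝ (Fin n) (Fin n)) (lrLin A B) = A ⊗ₖ Bᵀ := by
    ext ⟨i, j⟩ ⟨k, l⟩
    rw [LinearMap.toMatrix_apply, Matrix.stdBasis_eq_single, stdBasis_repr_apply]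
    simp [lrLin, Matrix.mul_apply, Matrix.single, Matrix.kroneckerMap_apply,
      Finset.sum_comm (γ := Fin n), ite_and, mul_comm]
  rw [key, Matrix.det_kronecker]
  simp [Fintype.card_fin]

/-- Left-right multiplication by invertible matrices as a linear equivalence. -/
noncomputable def lrEquiv (g h : (Matrix (Fin n) (Fin n) ℝ)ˣ) :
    Matrix (Fin n) (Fin n) ℝ ≃ₗ[ℝ] Matrix (Fin n) (Fin n) ℝ :=
  LinearEquiv.ofLinear (lrLin (g : Matrix (Fin n) (Fin n) ℝ) (↑h⁻¹))
    (lrLin (↑g⁻¹) (h : Matrix (Fin n) (Fin n) ℝ))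
    (by
      apply LinearMap.ext; intro x
      show (g : Matrix (Fin n) (Fin n) ℝ) * ((↑g⁻¹ : Matrix (Fin n) (Fin n) ℝ) * x *
        (h : Matrix (Fin n) (Fin n) ℝ)) * (↑h⁻¹ : Matrix (Fin n) (Fin n) ℝ) = x
      calc (g : Matrix (Fin n) (Fin n) ℝ) * ((↑g⁻¹ : Matrix (Fin n) (Fin n) ℝ) * x *
            (h : Matrix (Fin n) (Fin n) ℝ)) * (↑h⁻¹ : Matrix (Fin n) (Fin n) ℝ)
          = ((g : Matrix (Fin n) (Fin n) ℝ) * (↑g⁻¹ : Matrix (Fin n) (Fin n) ℝ)) * x *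
            ((h : Matrix (Fin n) (Fin n) ℝ) * (↑h⁻¹ : Matrix (Fin n) (Fin n) ℝ)) := by
            noncomm_ring
        _ = x := by rw [Units.mul_inv, Units.mul_inv, one_mul, mul_one])
    (by
      apply LinearMap.ext; intro x
      show (↑g⁻¹ : Matrix (Fin n) (Fin n) ℝ) * ((g : Matrix (Fin n) (Fin n) ℝ) * x *
        (↑h⁻¹ : Matrix (Fin n) (Fin n) ℝ)) * (h : Matrix (Fin n) (Fin n) ℝ) = x
      calc (↑g⁻¹ : Matrix (Fin n) (Fin n) ℝ) * ((g : Matrix (Fin n) (Fin n) ℝ) * x *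
            (↑h⁻¹ : Matrix (Fin n) (Fin n) ℝ)) * (h : Matrix (Fin n) (Fin n) ℝ)
          = ((↑g⁻¹ : Matrix (Fin n) (Fin n) ℝ) * (g : Matrix (Fin n) (Fin n) ℝ)) * x *
            ((↑h⁻¹ : Matrix (Fin n) (Fin n) ℝ) * (h : Matrix (Fin n) (Fin n) ℝ)) := by
            noncomm_ring
        _ = x := by rw [Units.inv_mul, Units.inv_mul, one_mul, mul_one])

lemma lrEquiv_apply (g h : (Matrix (Fin n) (Fin n) ℝ)ˣ) (x : Matrix (Fin n) (Fin n) ℝ) :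
    lrEquiv g h x = (g : Matrix (Fin n) (Fin n) ℝ) * x * (↑h⁻¹ : Matrix (Fin n) (Fin n) ℝ) :=
  rfl

lemma lrEquiv_coe (g h : (Matrix (Fin n) (Fin n) ℝ)ˣ) :
    (lrEquiv g h : Matrix (Fin n) (Fin n) ℝ →ₗ[ℝ] Matrix (Fin n) (Fin n) ℝ)
      = lrLin (g : Matrix (Fin n) (Fin n) ℝ) (↑h⁻¹) := rfl

end DetLR

theorem haar_measure_on_first_factor_counterexample (n : ℕ) (hn : 0 < n) :
    (∀ φ : 𝓢(Matrix (Fin n) (Fin n) ℝ × Matrix (Fin n) (Fin n) ℝ, ℂ),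
      Integrable (fun x : Matrix (Fin n) (Fin n) ℝ => φ (x, 0))) ∧
    ∃ T : 𝓢(Matrix (Fin n) (Fin n) ℝ × Matrix (Fin n) (Fin n) ℝ, ℂ) →L[ℂ] ℂ,
      (∀ φ : 𝓢(Matrix (Fin n) (Fin n) ℝ × Matrix (Fin n) (Fin n) ℝ, ℂ),
        T φ = ∫ x : Matrix (Fin n) (Fin n) ℝ, φ (x, 0)) ∧
      (∀ (g h : (Matrix (Fin n) (Fin n) ℝ)ˣ)
        (φ ψ : 𝓢(Matrix (Fin n) (Fin n) ℝ × Matrix (Fin n) (Fin n) ℝ, ℂ)),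
        (∀ p : Matrix (Fin n) (Fin n) ℝ × Matrix (Fin n) (Fin n) ℝ,
          ψ p = φ ((g : Matrix (Fin n) (Fin n) ℝ) * p.1 * (↑h⁻¹ : Matrix (Fin n) (Fin n) ℝ),
            (h : Matrix (Fin n) (Fin n) ℝ) * p.2 * (↑g⁻¹ : Matrix (Fin n) (Fin n) ℝ))) →
        T ψ = (((|((g : Matrix (Fin n) (Fin n) ℝ)).det| ^ (-(n : ℤ)) *
          |((h : Matrix (Fin n) (Fin n) ℝ)).det| ^ (n : ℤ) : ℝ) : ℂ)) * T φ) ∧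
      ∃ φ ψ : 𝓢(Matrix (Fin n) (Fin n) ℝ × Matrix (Fin n) (Fin n) ℝ, ℂ),
        (∀ p : Matrix (Fin n) (Fin n) ℝ × Matrix (Fin n) (Fin n) ℝ,
          ψ p = φ (p.2ᵀ, p.1ᵀ)) ∧ T ψ ≠ T φ := by
  classical
  set V := Matrix (Fin n) (Fin n) ℝ with hV
  -- the restriction map `φ ↦ (x ↦ φ (x, 0))` as a continuous linear map on Schwartz spaces
  have hup : ∃ (k : ℕ) (C : ℝ), ∀ x : V,
      ‖x‖ ≤ C * (1 + ‖(ContinuousLinearMap.inl ℝ V V) x‖) ^ k := by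
    refine ⟨1, 1, fun x => ?_⟩
    have h1 : ‖x‖ ≤ ‖((x, (0 : V)) : V × V)‖ := norm_fst_le ((x, (0 : V)) : V × V)
    have h2 : ‖(ContinuousLinearMap.inl ℝ V V) x‖ = ‖((x, (0 : V)) : V × V)‖ := rfl
    rw [h2, pow_one, one_mul]
    linarith
  set R : 𝓢(V × V, ℂ) →L[ℂ] 𝓢(V, ℂ) :=
    compCLM ℂ (ContinuousLinearMap.inl ℝ V V).hasTemperateGrowth hup with hR
  have hRapp : ∀ (φ : 𝓢(V × V, ℂ)) (x : V), (R φ) x = φ (x, 0) := fun φ x => rfl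
  have hInt : ∀ φ : 𝓢(V × V, ℂ), Integrable (fun x : V => φ (x, 0)) := by
    intro φ
    exact (R φ).integrable
  refine ⟨hInt, (integralCLM ℂ (volume : Measure V)).comp R, ?_, ?_, ?_⟩
  · intro φ
    rw [ContinuousLinearMap.comp_apply, integralCLM_apply]
    rfl
  · -- equivariance
    intro g h φ ψ hψ
    rw [ContinuousLinearMap.comp_apply, ContinuousLinearMap.comp_apply,
      integralCLM_apply, integralCLM_apply]
    have h0 : ∀ x : V, (R ψ) x = (fun v : V => φ (v, 0)) (lrEquiv g h x) := by
      intro x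
      rw [hRapp, hψ (x, 0)]
      simp [lrEquiv_apply, Matrix.mul_zero, Matrix.zero_mul]
    calc ∫ x : V, (R ψ) x
        = ∫ x : V, (fun v : V => φ (v, 0)) (lrEquiv g h x) := by
          exact integral_congr_ae (Filter.Eventually.of_forall h0)
      _ = |LinearMap.det (lrEquiv g h : V →ₗ[ℝ] V)|⁻¹ • ∫ v : V, φ (v, 0) :=
          integral_comp_linearEquiv' volume (lrEquiv g h) (fun v : V => φ (v, 0))
      _ = ((|((g : V)).det| ^ (-(n : ℤ)) * |((h : V)).det| ^ ((n : ℤ)) : ℝ) : ℂ)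
            * ∫ x : V, (R φ) x := by
          have hdet : |LinearMap.det (lrEquiv g h : V →ₗ[ℝ] V)|⁻¹
              = |((g : V)).det| ^ (-(n : ℤ)) * |((h : V)).det| ^ ((n : ℤ)) := by
            rw [lrEquiv_coe, det_lrLin]
            have hinv : (↑h⁻¹ : V).det = ((h : V)).det⁻¹ := by
              apply eq_inv_of_mul_eq_one_left
              rw [← Matrix.det_mul, ← Units.val_mul, inv_mul_cancel, Units.val_one,
                Matrix.det_one]
            rw [hinv, _root_.zpow_neg, zpow_natCast, zpow_natCast, abs_mul, abs_pow, abs_pow,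
              mul_inv, abs_inv, inv_pow, inv_inv]
          rw [Complex.real_smul, hdet]
          norm_cast
  · -- non-invariance under `(x, y) ↦ (yᵀ, xᵀ)`
    -- the bump function centered at `(c, 0)` with `c ≠ 0`
    set c : V := Matrix.single (⟨0, hn⟩ : Fin n) (⟨0, hn⟩ : Fin n) (1 : ℝ) with hc
    have hcne : c ≠ 0 := by
      intro hzero
      have h1 : c (⟨0, hn⟩ : Fin n) (⟨0, hn⟩ : Fin n) = 1 := Matrix.single_apply_same _ _ _
      rw [hzero] at h1
      exact one_ne_zero h1.symm
    have hcpos : 0 < ‖c‖ := norm_pos_iff.mpr hcne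
    set b : ContDiffBump ((c, (0 : V)) : V × V) :=
      ⟨‖c‖ / 4, ‖c‖ / 2, by positivity, by linarith⟩ with hb
    have hsmooth : ContDiff ℝ ((⊤ : ℕ∞) : WithTop ℕ∞) (fun p : V × V => ((b p : ℝ) : ℂ)) :=
      Complex.ofRealCLM.contDiff.comp b.contDiff
    have hcsupp : HasCompactSupport (fun p : V × V => ((b p : ℝ) : ℂ)) :=
      b.hasCompactSupport.comp_left (g := fun r : ℝ => (r : ℂ)) Complex.ofReal_zero
    set φ : 𝓢(V × V, ℂ) := myOfCompactSupport _ hsmooth hcsupp with hφ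
    set σ : (V × V) ≃ₗ[ℝ] (V × V) :=
      (LinearEquiv.prodComm ℝ V V).trans
        ((Matrix.transposeLinearEquiv (Fin n) (Fin n) ℝ ℝ).prodCongr
          (Matrix.transposeLinearEquiv (Fin n) (Fin n) ℝ ℝ)) with hσ
    set ψ : 𝓢(V × V, ℂ) := compCLMOfContinuousLinearEquiv ℂ σ.toContinuousLinearEquiv φ with hψd
    have hψeq : ∀ p : V × V, ψ p = φ (p.2ᵀ, p.1ᵀ) := fun p => rfl
    refine ⟨φ, ψ, hψeq, ?_⟩
    have hTψ : (integralCLM ℂ (volume : Measure V)).comp R ψ = 0 := by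
      rw [ContinuousLinearMap.comp_apply, integralCLM_apply]
      have hz : ∀ x : V, (R ψ) x = 0 := by
        intro x
        rw [hRapp, hψeq (x, 0)]
        show ((b (((0 : V)ᵀ, xᵀ) : V × V) : ℝ) : ℂ) = 0
        rw [b.zero_of_le_dist ?_, Complex.ofReal_zero]
        rw [Prod.dist_eq]
        refine le_trans ?_ (le_max_left _ _)
        have : dist ((0 : V)ᵀ) c = ‖c‖ := by rw [Matrix.transpose_zero, dist_zero_left]
        rw [this]
        show ‖c‖ / 2 ≤ ‖c‖
        linarith
      simp only [hz]
      exact integral_zero _ _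
    have hTφ : (integralCLM ℂ (volume : Measure V)).comp R φ ≠ 0 := by
      rw [ContinuousLinearMap.comp_apply, integralCLM_apply]
      have hre : ∀ x : V, (R φ) x = ((b ((x, (0 : V)) : V × V) : ℝ) : ℂ) := fun x => rfl
      have hint : Integrable (fun x : V => (b ((x, (0 : V)) : V × V) : ℝ)) := by
        have := (hInt φ).re
        refine this.congr (Filter.Eventually.of_forall fun x => ?_)
        show ((b ((x, (0 : V)) : V × V) : ℝ) : ℂ).re = _
        simp [Complex.ofReal_re]
      have hpos : 0 < ∫ x : V, (b ((x, (0 : V)) : V × V) : ℝ) := by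
        rw [integral_pos_iff_support_of_nonneg (fun x => b.nonneg) hint]
        have hsub : Metric.ball c (‖c‖ / 2) ⊆
            Function.support (fun x : V => (b ((x, (0 : V)) : V × V) : ℝ)) := by
          intro x hx
          have hmem : ((x, (0 : V)) : V × V) ∈ Metric.ball ((c, (0 : V)) : V × V) b.rOut := by
            rw [Metric.mem_ball, Prod.dist_eq]
            have : dist ((0 : V)) ((0 : V)) = 0 := dist_self _
            rw [this, max_eq_left dist_nonneg]
            exact hx
          exact ne_of_gt (b.pos_of_mem_ball hmem)
        have hball : (0 : ENNReal) < volume (Metric.ball c (‖c‖ / 2)) :=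
          Metric.measure_ball_pos volume c (by positivity)
        exact lt_of_lt_of_le hball (measure_mono hsub)
      have heq : ∫ x : V, (R φ) x = ∫ x : V, ((b ((x, (0 : V)) : V × V) : ℝ) : ℂ) :=
        integral_congr_ae (Filter.Eventually.of_forall fun x => hre x)
      rw [heq]
      have hoR : ∫ x : V, ((b ((x, (0 : V)) : V × V) : ℝ) : ℂ)
          = ((∫ x : V, (b ((x, (0 : V)) : V × V) : ℝ) : ℝ) : ℂ) := integral_ofReal
      rw [hoR]
      exact_mod_cast ne_of_gt hpos
    rw [hTψ]
    exact fun hEq => hTφ hEq.symm
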